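/- In the lockset effect quantale L over a set of locks (multiset pairs with Err), the freely iterable elements are exactly Err together with the pairs (a, a) of equal multisets; and the derived iteration operator sends each (a,a) to itself and every pair (a,b) with a ≠ b to Err. -/

import Mathlib

structure EffectQuantale (E : Type*) where
  join : E → E → E
  seq : E → E → E
  top : E
  unit : E
  join_comm : ∀ a b, join a b = join b a
  join_assoc : ∀ a b c, join (join a b) c = join a (join b c)
  join_idem : ∀ a, join a a = a
  join_top : ∀ a, join a top = top
  seq_assoc : ∀ a b c, seq (seq a b) c = seq a (seq b c)
  unit_seq : ∀ a, seq unit a = a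
  seq_unit : ∀ a, seq a unit = a
  seq_join : ∀ a b c, seq a (join b c) = join (seq a b) (seq a c)
  join_seq : ∀ a b c, seq (join a b) c = join (seq a c) (seq b c)
  top_seq : ∀ a, seq top a = top
  seq_top : ∀ a, seq a top = top

/-- The induced partial order: `x ⊑ y` iff `x ⊔ y = y`. -/
def EffectQuantale.le {E : Type*} (Q : EffectQuantale E) (x y : E) : Prop :=
  Q.join x y = y

section Lockset

variable {X : Type*} [DecidableEq X]

/-- Elements of the lockset effect quantale: pairs of multisets of locks
(claims held before / after), plus an error element (none). -/
abbrev LockEff (X : Type*) := Option (Multiset X × Multiset X)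

/-- Join in the lockset quantale: defined when both sides acquire and release
the same locks the same number of times, Err otherwise. -/
def ljoin : LockEff X → LockEff X → LockEff X
  | some (a, a'), some (b, b') =>
      if b - b' = a - a' ∧ b' - b = a' - a then some (a ∪ b, a' ∪ b') else none
  | _, _ => none

/-- Sequencing in the lockset quantale: the least pair (c, c') with a ⊆ c,
b ⊆ (c ∖ (a∖a')) ∪ (a'∖a), and c' the result of both actions. -/
def lseq : LockEff X → LockEff X → LockEff X
  | some (a, a'), some (b, b') =>
      let c := a ∪ ((b - (a' - a)) + (a - a'))
      let mid := (c - (a - a')) + (a' - a)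
      some (c, (mid - (b - b')) + (b' - b))
  | _, _ => none

/-- The induced order on lockset effects. -/
def lle (x y : LockEff X) : Prop := ljoin x y = y

lemma lseq_diag (a b : Multiset X) : lseq (some (a,b)) (some (a,b)) = some (a,b) ↔ a = b := by
  simp only [lseq, Option.some.injEq, Prod.mk.injEq]
  constructor
  · rintro ⟨h1, h2⟩
    ext z
    have c1 := congrArg (Multiset.count z) h1
    have c2 := congrArg (Multiset.count z) h2
    simp [Multiset.count_union, Multiset.count_sub, Multiset.count_add] at c1 c2
    omega
  · rintro rfl
    constructor <;> (ext z; simp [Multiset.count_union, Multiset.count_sub]; try omega)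

lemma ljoin_comm (x y : LockEff X) : ljoin x y = ljoin y x := by
  match x, y with
  | none, none => rfl
  | none, some _ => rfl
  | some _, none => rfl
  | some (a,a'), some (b,b') =>
    simp only [ljoin]
    by_cases h : b - b' = a - a' ∧ b' - b = a' - a
    · rw [if_pos h, if_pos ⟨h.1.symm, h.2.symm⟩, Multiset.union_comm a b, Multiset.union_comm a' b']
    · rw [if_neg h, if_neg fun h' => h ⟨h'.1.symm, h'.2.symm⟩]

/-- In the lockset effect quantale, the freely iterable elements are exactly Err
and the pairs (a, a); the derived iteration sends each (a, a) to itself and every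
(a, b) with a ≠ b to Err. -/
theorem lockset_iteration :
    (∀ x : LockEff X, lseq x x = x ↔ (x = none ∨ ∃ a : Multiset X, x = some (a, a))) ∧
    (∀ star : LockEff X → LockEff X,
      (∀ x : LockEff X,
        (lle x (star x) ∧ lle (some (0, 0)) (star x) ∧ lseq (star x) (star x) = star x) ∧
        ∀ y : LockEff X, lle x y → lle (some (0, 0)) y → lseq y y = y → lle (star x) y) →
      (∀ a : Multiset X, star (some (a, a)) = some (a, a)) ∧
      (∀ a b : Multiset X, a ≠ b → star (some (a, b)) = none)) := by
  have iter : ∀ x : LockEff X, lseq x x = x ↔ (x = none ∨ ∃ a : Multiset X, x = some (a, a)) := by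
    intro x
    match x with
    | none => simp [lseq]
    | some (a, b) =>
      rw [lseq_diag]
      constructor
      · rintro rfl; exact Or.inr ⟨a, rfl⟩
      · rintro (h | ⟨c, hc⟩)
        · exact absurd h (by simp)
        · obtain ⟨rfl, rfl⟩ : a = c ∧ b = c := by simpa using hc
          rfl
  refine ⟨iter, fun star hstar => ?_⟩
  constructor
  · intro a
    obtain ⟨⟨hx, hu, hi⟩, hmin⟩ := hstar (some (a,a))
    have h2 : lle (star (some (a,a))) (some (a,a)) := by
      apply hmin
      · have hu : a ∪ a = a := by ext z; simp [Multiset.count_union]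
        simp [lle, ljoin, hu]
      · simp only [lle, ljoin, tsub_self, Multiset.zero_sub, if_pos (And.intro rfl rfl)]
        simp
      · exact (lseq_diag a a).mpr rfl
    -- antisymmetry
    have := hx
    unfold lle at this h2
    rw [ljoin_comm] at h2
    rw [← this, h2]
  · intro a b hab
    obtain ⟨⟨hx, hu, hi⟩, hmin⟩ := hstar (some (a,b))
    rcases (iter _).mp hi with h | ⟨c, hc⟩
    · exact h
    · exfalso
      unfold lle at hx
      rw [hc] at hx
      simp only [ljoin] at hx
      by_cases h : c - c = a - b ∧ c - c = b - a
      · apply hab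
        have h1 : a - b = 0 := by rw [← h.1, tsub_self]
        have h2 : b - a = 0 := by rw [← h.2, tsub_self]
        exact le_antisymm (tsub_eq_zero_iff_le.mp h1) (tsub_eq_zero_iff_le.mp h2)
      · rw [if_neg h] at hx; exact Option.some_ne_none _ hx.symm

end Lockset
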